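/- arXiv:1806.09331 — 3 statements merged into one kernel-verified Lean document; each statement's English description precedes it below -/
import Mathlib

section
/- Energy identity in scattering direction coordinates: fix species masses m_1,…,m_I > 0 with total mass M := m_1+⋯+m_I, indices i,j, velocities v, v_* ∈ ℝ³ and σ ∈ S². Set u := v − v_*, V := (m_i v + m_j v_*)/(m_i+m_j), r := m_i/(m_i+m_j), v' := V + (1−r)|u|σ, v'_* := V − r|u|σ, and E := ⟨v⟩_i² + ⟨v_*⟩_j². Define s := (1 + (m_i m_j/((m_i+m_j)M))|u|²)/E, p := (r(1−s) + (1−r)s)E, q := (rs + (1−r)(1−s))E, and λ := 2√(r(1−r)(sE−1)((1−s)E−1)). Then s ∈ [0,1], sE ≥ 1, (1−s)E = 1 + ((m_i+m_j)/M)|V|² ≥ 1, p + q = E, and, whenever V ≠ 0, ⟨v'⟩_i² = p + λ σ·(V/|V|) and ⟨v'_*⟩_j² = q − λ σ·(V/|V|); in particular ⟨v'⟩_i² + ⟨v'_*⟩_j² = ⟨v⟩_i² + ⟨v_*⟩_j². -/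
open MeasureTheory

noncomputable section

local notation "E3" => EuclideanSpace ℝ (Fin 3)

set_option maxHeartbeats 1000000 in
/-- Energy identity in scattering direction coordinates for the `(i,j)`-pair of
colliding particles of a mixture of `I` species. -/
theorem energy_identity_scattering_coordinates
    {I : ℕ} (hI : 0 < I) (m : Fin I → ℝ) (hm : ∀ k, 0 < m k) (i j : Fin I)
    (v vs σ : E3) (hσ : ‖σ‖ = 1) :
    let M : ℝ := ∑ k, m k
    let u : E3 := v - vs
    let V : E3 := (m i + m j)⁻¹ • (m i • v + m j • vs)
    let r : ℝ := m i / (m i + m j)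
    let v' : E3 := V + ((1 - r) * ‖u‖) • σ
    let vs' : E3 := V - (r * ‖u‖) • σ
    let E : ℝ := (1 + (m i / M) * ‖v‖ ^ 2) + (1 + (m j / M) * ‖vs‖ ^ 2)
    let s : ℝ := (1 + (m i * m j / ((m i + m j) * M)) * ‖u‖ ^ 2) / E
    let p : ℝ := (r * (1 - s) + (1 - r) * s) * E
    let q : ℝ := (r * s + (1 - r) * (1 - s)) * E
    let lam : ℝ := 2 * Real.sqrt (r * (1 - r) * (s * E - 1) * ((1 - s) * E - 1))
    (0 ≤ s ∧ s ≤ 1) ∧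
    1 ≤ s * E ∧
    ((1 - s) * E = 1 + ((m i + m j) / M) * ‖V‖ ^ 2 ∧ 1 ≤ (1 - s) * E) ∧
    p + q = E ∧
    (V ≠ 0 →
      (1 + (m i / M) * ‖v'‖ ^ 2 = p + lam * (inner ℝ σ (‖V‖⁻¹ • V) : ℝ) ∧
       1 + (m j / M) * ‖vs'‖ ^ 2 = q - lam * (inner ℝ σ (‖V‖⁻¹ • V) : ℝ))) ∧
    (1 + (m i / M) * ‖v'‖ ^ 2) + (1 + (m j / M) * ‖vs'‖ ^ 2)
      = (1 + (m i / M) * ‖v‖ ^ 2) + (1 + (m j / M) * ‖vs‖ ^ 2) := by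
  intro M u V r v' vs' E s p q lam
  have hMdef : M = ∑ k, m k := rfl
  have hudef : u = v - vs := rfl
  have hVdef : V = (m i + m j)⁻¹ • (m i • v + m j • vs) := rfl
  have hrdef : r = m i / (m i + m j) := rfl
  have hv'def : v' = V + ((1 - r) * ‖u‖) • σ := rfl
  have hvs'def : vs' = V - (r * ‖u‖) • σ := rfl
  have hEdef : E = (1 + (m i / M) * ‖v‖ ^ 2) + (1 + (m j / M) * ‖vs‖ ^ 2) := rfl
  have hsdef : s = (1 + (m i * m j / ((m i + m j) * M)) * ‖u‖ ^ 2) / E := rfl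
  have hpdef : p = (r * (1 - s) + (1 - r) * s) * E := rfl
  have hqdef : q = (r * s + (1 - r) * (1 - s)) * E := rfl
  have hlamdef : lam = 2 * Real.sqrt (r * (1 - r) * (s * E - 1) * ((1 - s) * E - 1)) := rfl
  clear_value lam q p s E vs' v' r V u M
  have hmi := hm i
  have hmj := hm j
  haveI : Nonempty (Fin I) := ⟨⟨0, hI⟩⟩
  have hM : 0 < M := by
    rw [hMdef]; exact Finset.sum_pos (fun k _ => hm k) Finset.univ_nonempty
  have hk : 0 < m i + m j := by linarith
  -- inner product abbreviations
  set b : ℝ := (inner ℝ v vs : ℝ) with hb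
  set t : ℝ := (inner ℝ V σ : ℝ) with ht
  -- norm expansions
  have hu2 : ‖u‖ ^ 2 = ‖v‖ ^ 2 - 2 * b + ‖vs‖ ^ 2 := by
    rw [hudef]; exact norm_sub_sq_real v vs
  have hV2 : ‖V‖ ^ 2 = ((m i + m j)⁻¹) ^ 2 *
      ((m i) ^ 2 * ‖v‖ ^ 2 + 2 * (m i * m j) * b + (m j) ^ 2 * ‖vs‖ ^ 2) := by
    rw [hVdef, norm_smul, mul_pow]
    rw [norm_add_sq_real (m i • v) (m j • vs)]
    rw [real_inner_smul_left, real_inner_smul_right, norm_smul, norm_smul]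
    simp only [Real.norm_eq_abs, abs_of_pos hmi, abs_of_pos hmj,
      abs_of_pos (inv_pos.mpr hk)]
    ring
  have hv'2 : ‖v'‖ ^ 2 = ‖V‖ ^ 2 + 2 * ((1 - r) * ‖u‖) * t + ((1 - r) * ‖u‖) ^ 2 := by
    rw [hv'def, norm_add_sq_real, real_inner_smul_right, norm_smul, mul_pow, hσ]
    rw [Real.norm_eq_abs, sq_abs]; ring
  have hvs'2 : ‖vs'‖ ^ 2 = ‖V‖ ^ 2 - 2 * (r * ‖u‖) * t + (r * ‖u‖) ^ 2 := by
    rw [hvs'def, norm_sub_sq_real, real_inner_smul_right, norm_smul, mul_pow, hσ]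
    rw [Real.norm_eq_abs, sq_abs]; ring
  have hE : 0 < E := by
    rw [hEdef]; positivity
  have hsE : s * E = 1 + (m i * m j / ((m i + m j) * M)) * ‖u‖ ^ 2 := by
    rw [hsdef]; field_simp
  have h1sE : (1 - s) * E = 1 + ((m i + m j) / M) * ‖V‖ ^ 2 := by
    have h : (1 - s) * E = E - s * E := by ring
    rw [h, hsE, hEdef, hV2, hu2]
    field_simp
    ring
  have hsE_ge : 1 ≤ s * E := by
    rw [hsE]
    have h0 : 0 ≤ (m i * m j / ((m i + m j) * M)) * ‖u‖ ^ 2 := by positivity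
    linarith
  have h1sE_ge : 1 ≤ (1 - s) * E := by
    rw [h1sE]
    have h0 : 0 ≤ ((m i + m j) / M) * ‖V‖ ^ 2 := by positivity
    linarith
  have hs0 : 0 ≤ s := by
    rw [hsdef]; positivity
  have hs1 : s ≤ 1 := by
    nlinarith
  -- lambda formula
  have hlam : lam = 2 * (m i * m j / ((m i + m j) * M)) * ‖u‖ * ‖V‖ := by
    rw [hlamdef]
    have hin : r * (1 - r) * (s * E - 1) * ((1 - s) * E - 1)
        = ((m i * m j / ((m i + m j) * M)) * ‖u‖ * ‖V‖) ^ 2 := by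
      rw [hsE, h1sE, hrdef]; field_simp; ring
    rw [hin, Real.sqrt_sq (by positivity)]; ring
  refine ⟨⟨hs0, hs1⟩, hsE_ge, ⟨h1sE, h1sE_ge⟩, by rw [hpdef, hqdef]; ring, ?_, ?_⟩
  · intro hV
    have hW : 0 < ‖V‖ := norm_pos_iff.mpr hV
    have hiσ : (inner ℝ σ (‖V‖⁻¹ • V) : ℝ) = ‖V‖⁻¹ * t := by
      rw [real_inner_smul_right, real_inner_comm]
    have hp2 : p = r * ((1 - s) * E) + (1 - r) * (s * E) := by rw [hpdef]; ring
    have hq2 : q = r * (s * E) + (1 - r) * ((1 - s) * E) := by rw [hqdef]; ring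
    constructor
    · rw [hv'2, hlam, hp2, hsE, h1sE, hiσ, hrdef]
      field_simp
      ring
    · rw [hvs'2, hlam, hq2, hsE, h1sE, hiσ, hrdef]
      field_simp
      ring
  · rw [hv'2, hvs'2, hrdef]
    simp only [mul_pow]
    rw [hu2, hV2]
    field_simp
    ring
end
end

section
/- Generation estimate for the Bernoulli-type moment differential inequality: let a, b, c > 0 and let y : [0,∞) → [0,∞) be continuous, differentiable on (0,∞), and satisfy y'(t) ≤ −a·y(t)^{1+c} + b·y(t) for all t > 0. Then (1) for every t > 0, y(t) ≤ ( (a/b)(1 − e^{−cbt}) )^{−1/c}; and (2) there is an explicit constant K := (a/b)^{−1/c} · max{ (cb)^{−1/c} e^{b/2}, (1 − e^{−cb})^{−1/c} } such that y(t) ≤ K · max{1, t^{−1/c}} for all t > 0. -/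
open Real Set Filter

lemma aux_exp_bound (x : ℝ) (hx : 0 ≤ x) :
    x * Real.exp (-(x / 2)) ≤ 1 - Real.exp (-x) := by
  have hu : (0:ℝ) ≤ x / 2 := by linarith
  have hq := Real.quadratic_le_exp_of_nonneg hu
  set v := Real.exp (x / 2) with hv
  set p := Real.exp (-(x / 2)) with hp
  have hpv : p * v = 1 := by
    rw [hp, hv, ← Real.exp_add]; simp
  have hpp : Real.exp (-x) = p * p := by
    rw [hp, ← Real.exp_add]; ring_nf
  have hppos : 0 < p := Real.exp_pos _
  have hvpos : 0 < v := Real.exp_pos _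
  rw [hpp]
  set u := x / 2 with hu2
  have hxu : x = 2 * u := by rw [hu2]; ring
  rw [hxu]
  -- goal : 2*u*p ≤ 1 - p*p ; know v ≥ 1+u+u^2/2, p*v=1
  have hw : 1 + u + u ^ 2 / 2 ≤ v := hq
  nlinarith [sq_nonneg (u*u), mul_pos hppos hppos, sq_nonneg (v - (1+u+u^2/2)),
    mul_nonneg (mul_nonneg hppos.le hppos.le) (sq_nonneg (u^2)),
    mul_nonneg (sub_nonneg.2 hw) (mul_nonneg hppos.le hppos.le),
    mul_nonneg hu (mul_nonneg hppos.le hppos.le)]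

lemma aux_deriv (A c b : ℝ) (s : ℝ) :
    HasDerivAt (fun u : ℝ => A * (1 - Real.exp (-(c * b * u))))
      (A * (c * b * Real.exp (-(c * b * s)))) s := by
  have h1 : HasDerivAt (fun u : ℝ => c * b * u) (c * b) s := by
    simpa using (hasDerivAt_id s).const_mul (c * b)
  have h2 := ((h1.neg.exp).const_sub 1).const_mul A
  refine h2.congr_deriv ?_
  simp only [Pi.neg_apply]
  ring

lemma aux_part1 (a b c : ℝ) (ha : 0 < a) (hb : 0 < b) (hc : 0 < c)
    (y y' : ℝ → ℝ) (hcont : ContinuousOn y (Set.Ici 0))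
    (hynn : ∀ t : ℝ, 0 ≤ t → 0 ≤ y t)
    (hderiv : ∀ t : ℝ, 0 < t → HasDerivAt y (y' t) t)
    (hODI : ∀ t : ℝ, 0 < t → y' t ≤ -a * y t ^ (1 + c) + b * y t)
    (t : ℝ) (ht : 0 < t) :
    y t ≤ (a / b * (1 - Real.exp (-(c * b * t)))) ^ (-(1 / c)) := by
  have hcb : 0 < c * b := mul_pos hc hb
  -- Step A: comparison with exact solutions for A < a/b
  have key : ∀ A : ℝ, 0 < A → A < a / b →
      y t ≤ (A * (1 - Real.exp (-(c * b * t)))) ^ (-(1 / c)) := by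
    intro A hA hAab
    set g : ℝ → ℝ := fun s => A * (1 - Real.exp (-(c * b * s))) with hg
    have hgpos : ∀ s : ℝ, 0 < s → 0 < g s := by
      intro s hs
      have : Real.exp (-(c * b * s)) < 1 :=
        Real.exp_lt_one_iff.2 (by nlinarith)
      have : 0 < 1 - Real.exp (-(c * b * s)) := by linarith
      exact mul_pos hA this
    set B : ℝ → ℝ := fun s => g s ^ (-(1 / c)) with hB
    set B' : ℝ → ℝ := fun s =>
      -(1 / c) * g s ^ (-(1 / c) - 1) * (A * (c * b * Real.exp (-(c * b * s)))) with hB'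
    have hBderiv : ∀ s : ℝ, 0 < s → HasDerivAt B (B' s) s := by
      intro s hs
      exact (Real.hasDerivAt_rpow_const (p := -(1 / c))
        (Or.inl (hgpos s hs).ne')).comp s (aux_deriv A c b s)
    -- max of y on [0, t]
    obtain ⟨m, hm, hmax⟩ := (isCompact_Icc : IsCompact (Icc (0:ℝ) t)).exists_isMaxOn
      ⟨0, by constructor <;> linarith⟩ (hcont.mono (fun x hx => hx.1))
    set M : ℝ := max (y m) 1 with hM
    have hM1 : (1:ℝ) ≤ M := le_max_right _ _
    have hMpos : (0:ℝ) < M := by linarith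
    have hMy : ∀ s ∈ Icc (0:ℝ) t, y s ≤ M := fun s hs => (hmax hs).trans (le_max_left _ _)
    set t₁ : ℝ := min t (M ^ (-c) / (A * (c * b))) with ht₁
    have hMc : 0 < M ^ (-c) := Real.rpow_pos_of_pos hMpos _
    have ht₁pos : 0 < t₁ := lt_min ht (div_pos hMc (mul_pos hA hcb))
    have ht₁t : t₁ ≤ t := min_le_left _ _
    -- g t₁ ≤ M ^ (-c)
    have hgle : g t₁ ≤ M ^ (-c) := by
      have h1 : 1 - Real.exp (-(c * b * t₁)) ≤ c * b * t₁ := by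
        have := Real.add_one_le_exp (-(c * b * t₁)); linarith
      have h2 : t₁ ≤ M ^ (-c) / (A * (c * b)) := min_le_right _ _
      have h3 : A * (c * b * t₁) ≤ M ^ (-c) := by
        rw [← mul_assoc]
        calc A * (c * b) * t₁ ≤ A * (c * b) * (M ^ (-c) / (A * (c * b))) := by
              exact mul_le_mul_of_nonneg_left h2 (by positivity)
          _ = M ^ (-c) := by field_simp
      calc g t₁ ≤ A * (c * b * t₁) := by
            simp only [hg]; exact mul_le_mul_of_nonneg_left h1 hA.le
        _ ≤ M ^ (-c) := h3
    -- y t₁ ≤ B t₁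
    have hinit : y t₁ ≤ B t₁ := by
      have h1 : (M ^ (-c)) ^ (-(1 / c)) ≤ B t₁ :=
        Real.rpow_le_rpow_of_nonpos (hgpos t₁ ht₁pos) hgle
          (neg_nonpos.2 (by positivity))
      have h2 : (M ^ (-c)) ^ (-(1 / c)) = M := by
        rw [← Real.rpow_mul hMpos.le]
        have : -c * -(1 / c) = 1 := by field_simp
        rw [this, Real.rpow_one]
      have h3 : y t₁ ≤ M := hMy t₁ ⟨ht₁pos.le, ht₁t⟩
      linarith [h2 ▸ h1]
    -- Apply the fencing theorem on [t₁, t]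
    have hmain := image_le_of_deriv_right_lt_deriv_boundary'
      (f := y) (f' := y') (a := t₁) (b := t)
      (hcont.mono (fun x hx => le_trans ht₁pos.le hx.1))
      (fun x hx => (hderiv x (lt_of_lt_of_le ht₁pos hx.1)).hasDerivWithinAt)
      hinit
      (fun x hx => ((hBderiv x (lt_of_lt_of_le ht₁pos hx.1)).continuousAt).continuousWithinAt)
      (fun x hx => (hBderiv x (lt_of_lt_of_le ht₁pos hx.1)).hasDerivWithinAt)
      ?_ (right_mem_Icc.2 ht₁t)
    · exact hmain
    · -- the contact bound
      intro x hx hyx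
      have hxpos : 0 < x := lt_of_lt_of_le ht₁pos hx.1
      have hG : 0 < g x := hgpos x hxpos
      set E : ℝ := Real.exp (-(c * b * x)) with hE
      have hEpos : 0 < E := Real.exp_pos _
      have hE1 : E < 1 := Real.exp_lt_one_iff.2 (by nlinarith)
      set Q : ℝ := g x ^ (-(1 / c) - 1) with hQ
      have hQpos : 0 < Q := Real.rpow_pos_of_pos hG _
      have hBpow : B x ^ (1 + c) = Q := by
        show (g x ^ (-(1 / c))) ^ (1 + c) = g x ^ (-(1 / c) - 1)
        rw [← Real.rpow_mul hG.le]
        congr 1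
        field_simp
        ring
      have hBQ : B x = g x * Q := by
        have h0 := Real.rpow_add hG 1 (-(1 / c) - 1)
        have h1 : 1 + (-(1 / c) - 1) = -(1 / c) := by ring
        rw [h1, Real.rpow_one] at h0
        exact h0
      have hgx : g x = A * (1 - E) := rfl
      have hBx : B' x = -(A * b * E) * Q := by
        show -(1 / c) * g x ^ (-(1 / c) - 1) * (A * (c * b * E)) = -(A * b * E) * Q
        rw [← hQ]
        field_simp
      have hAb : A * b < a := (lt_div_iff₀ hb).1 hAab
      calc y' x ≤ -a * y x ^ (1 + c) + b * y x := hODI x hxpos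
        _ = -a * Q + b * (g x * Q) := by rw [hyx, hBpow, hBQ]
        _ < -(A * b * E) * Q := by
            rw [hgx]
            nlinarith [mul_pos (sub_pos.2 hAb) hQpos]
        _ = B' x := hBx.symm
  -- Step B: pass to the limit A → a/b
  have hab : 0 < a / b := div_pos ha hb
  have hqpos : 0 < 1 - Real.exp (-(c * b * t)) := by
    have : Real.exp (-(c * b * t)) < 1 := Real.exp_lt_one_iff.2 (by nlinarith)
    linarith
  set q : ℝ := 1 - Real.exp (-(c * b * t)) with hq
  have htend : Tendsto (fun A : ℝ => (A * q) ^ (-(1 / c))) (nhdsWithin (a / b) (Iio (a / b)))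
      (nhds ((a / b * q) ^ (-(1 / c)))) := by
    have h1 : ContinuousAt (fun A : ℝ => (A * q) ^ (-(1 / c))) (a / b) := by
      have h2 : ContinuousAt (fun A : ℝ => A * q) (a / b) :=
        continuousAt_id.mul continuousAt_const
      have h3 : ContinuousAt (fun x : ℝ => x ^ (-(1 / c))) (a / b * q) :=
        Real.continuousAt_rpow_const _ _ (Or.inl (mul_pos hab hqpos).ne')
      exact ContinuousAt.comp (g := fun x : ℝ => x ^ (-(1 / c))) (f := fun A : ℝ => A * q) h3 h2
    exact h1.continuousWithinAt
  refine ge_of_tendsto htend ?_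
  filter_upwards [Ioo_mem_nhdsLT_of_mem (Set.right_mem_Ioc.2 hab)] with A hA
  exact key A hA.1 hA.2

/-- Generation estimate for the Bernoulli-type moment differential inequality. -/
theorem bernoulli_odi_generation
    (a b c : ℝ) (ha : 0 < a) (hb : 0 < b) (hc : 0 < c)
    (y y' : ℝ → ℝ) (hcont : ContinuousOn y (Set.Ici 0))
    (hynn : ∀ t : ℝ, 0 ≤ t → 0 ≤ y t)
    (hderiv : ∀ t : ℝ, 0 < t → HasDerivAt y (y' t) t)
    (hODI : ∀ t : ℝ, 0 < t → y' t ≤ -a * y t ^ (1 + c) + b * y t) :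
    (∀ t : ℝ, 0 < t →
      y t ≤ (a / b * (1 - Real.exp (-(c * b * t)))) ^ (-(1 / c))) ∧
    (∀ t : ℝ, 0 < t →
      y t ≤ (a / b) ^ (-(1 / c))
          * max ((c * b) ^ (-(1 / c)) * Real.exp (b / 2))
              ((1 - Real.exp (-(c * b))) ^ (-(1 / c)))
          * max 1 (t ^ (-(1 / c)))) := by
  have P1 : ∀ t : ℝ, 0 < t →
      y t ≤ (a / b * (1 - Real.exp (-(c * b * t)))) ^ (-(1 / c)) :=
    fun t ht => aux_part1 a b c ha hb hc y y' hcont hynn hderiv hODI t ht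
  refine ⟨P1, ?_⟩
  intro t ht
  have hcb : 0 < c * b := mul_pos hc hb
  have hab : 0 < a / b := div_pos ha hb
  have habc : 0 < (a / b) ^ (-(1 / c)) := Real.rpow_pos_of_pos hab _
  have hq1pos : 0 < 1 - Real.exp (-(c * b)) := by
    have : Real.exp (-(c * b)) < 1 := Real.exp_lt_one_iff.2 (by nlinarith)
    linarith
  have hqtpos : 0 < 1 - Real.exp (-(c * b * t)) := by
    have : Real.exp (-(c * b * t)) < 1 := Real.exp_lt_one_iff.2 (by nlinarith)
    linarith
  set X : ℝ := (c * b) ^ (-(1 / c)) * Real.exp (b / 2) with hX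
  set Y : ℝ := (1 - Real.exp (-(c * b))) ^ (-(1 / c)) with hY
  have hXpos : 0 < X := mul_pos (Real.rpow_pos_of_pos hcb _) (Real.exp_pos _)
  have hYpos : 0 < Y := Real.rpow_pos_of_pos hq1pos _
  have hmaxpos : 0 < max X Y := lt_max_of_lt_left hXpos
  rcases le_or_gt 1 t with h1t | ht1
  · -- t ≥ 1
    have hmono : a / b * (1 - Real.exp (-(c * b))) ≤ a / b * (1 - Real.exp (-(c * b * t))) := by
      have : Real.exp (-(c * b * t)) ≤ Real.exp (-(c * b)) :=
        Real.exp_le_exp.2 (by nlinarith)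
      nlinarith
    have h2 : (a / b * (1 - Real.exp (-(c * b * t)))) ^ (-(1 / c))
        ≤ (a / b * (1 - Real.exp (-(c * b)))) ^ (-(1 / c)) :=
      Real.rpow_le_rpow_of_nonpos (mul_pos hab hq1pos) hmono (neg_nonpos.2 (by positivity))
    have h3 : (a / b * (1 - Real.exp (-(c * b)))) ^ (-(1 / c))
        = (a / b) ^ (-(1 / c)) * Y := by
      rw [hY, Real.mul_rpow hab.le hq1pos.le]
    calc y t ≤ (a / b * (1 - Real.exp (-(c * b * t)))) ^ (-(1 / c)) := P1 t ht
      _ ≤ (a / b * (1 - Real.exp (-(c * b)))) ^ (-(1 / c)) := h2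
      _ = (a / b) ^ (-(1 / c)) * Y := h3
      _ ≤ (a / b) ^ (-(1 / c)) * max X Y := by
          exact mul_le_mul_of_nonneg_left (le_max_right _ _) habc.le
      _ = (a / b) ^ (-(1 / c)) * max X Y * 1 := by ring
      _ ≤ (a / b) ^ (-(1 / c)) * max X Y * max 1 (t ^ (-(1 / c))) := by
          exact mul_le_mul_of_nonneg_left (le_max_left _ _)
            (by positivity)
  · -- 0 < t < 1
    have htc : 0 < t ^ (-(1 / c)) := Real.rpow_pos_of_pos ht _
    have hL : c * b * t * Real.exp (-(c * b) / 2) ≤ 1 - Real.exp (-(c * b * t)) := by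
      have haux := aux_exp_bound (c * b * t) (by positivity)
      have hmono : Real.exp (-(c * b) / 2) ≤ Real.exp (-(c * b * t) / 2) :=
        Real.exp_le_exp.2 (by nlinarith)
      have h0 : Real.exp (-(c * b * t) / 2) = Real.exp (-(c * b * t / 2)) := by ring_nf
      nlinarith [Real.exp_pos (-(c * b * t) / 2), mul_pos hcb ht]
    have hLpos : 0 < c * b * t * Real.exp (-(c * b) / 2) := by positivity
    have h2 : (a / b * (1 - Real.exp (-(c * b * t)))) ^ (-(1 / c))
        ≤ (a / b * (c * b * t * Real.exp (-(c * b) / 2))) ^ (-(1 / c)) :=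
      Real.rpow_le_rpow_of_nonpos (mul_pos hab hLpos)
        (mul_le_mul_of_nonneg_left hL hab.le) (neg_nonpos.2 (by positivity))
    have hsplit : (a / b * (c * b * t * Real.exp (-(c * b) / 2))) ^ (-(1 / c))
        = (a / b) ^ (-(1 / c)) * X * t ^ (-(1 / c)) := by
      rw [Real.mul_rpow hab.le (by positivity), Real.mul_rpow (by positivity) (Real.exp_pos _).le,
        Real.mul_rpow hcb.le ht.le, ← Real.exp_mul]
      have : -(c * b) / 2 * -(1 / c) = b / 2 := by field_simp
      rw [this, hX]
      ring
    have htmax : t ^ (-(1 / c)) ≤ max 1 (t ^ (-(1 / c))) := le_max_right _ _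
    calc y t ≤ (a / b * (1 - Real.exp (-(c * b * t)))) ^ (-(1 / c)) := P1 t ht
      _ ≤ (a / b * (c * b * t * Real.exp (-(c * b) / 2))) ^ (-(1 / c)) := h2
      _ = (a / b) ^ (-(1 / c)) * X * t ^ (-(1 / c)) := hsplit
      _ ≤ (a / b) ^ (-(1 / c)) * max X Y * max 1 (t ^ (-(1 / c))) := by
          apply mul_le_mul
          · exact mul_le_mul_of_nonneg_left (le_max_left _ _) habc.le
          · exact htmax
          · exact htc.le
          · positivity
end

section
/- Polynomial inequality for moment products: let p, a, b be real numbers with 0 ≤ b and b + 1 ≤ a ≤ (p+1)/2. Then for all real x, y ≥ 0, x^a y^{p−a} + x^{p−a} y^a ≤ x^b y^{p−b} + x^{p−b} y^b. -/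
lemma aux_rpow_ineq (p a b u : ℝ) (hba : b ≤ a) (hab : a + b ≤ p) (hu : 0 < u) :
    u ^ a + u ^ (p - a) ≤ u ^ b + u ^ (p - b) := by
  have key : 0 ≤ (u ^ a - u ^ b) * (u ^ (p - a - b) - 1) := by
    rcases le_or_gt 1 u with h1 | h1
    · have h2 : u ^ b ≤ u ^ a := Real.rpow_le_rpow_of_exponent_le h1 hba
      have h3 : (1:ℝ) ≤ u ^ (p - a - b) := by
        calc (1:ℝ) = u ^ (0:ℝ) := (Real.rpow_zero u).symm
        _ ≤ u ^ (p - a - b) := Real.rpow_le_rpow_of_exponent_le h1 (by linarith)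
      nlinarith
    · have h2 : u ^ a ≤ u ^ b := Real.rpow_le_rpow_of_exponent_ge hu h1.le hba
      have h3 : u ^ (p - a - b) ≤ 1 := by
        calc u ^ (p - a - b) ≤ u ^ (0:ℝ) :=
          Real.rpow_le_rpow_of_exponent_ge hu h1.le (by linarith)
        _ = 1 := Real.rpow_zero u
      nlinarith
  have e : u ^ (p - a - b) * u ^ a = u ^ (p - b) := by
    rw [← Real.rpow_add hu]; ring_nf
  have e2 : u ^ (p - a - b) * u ^ b = u ^ (p - a) := by
    rw [← Real.rpow_add hu]; ring_nf
  nlinarith [key]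

/-- Polynomial inequality for moment products (real powers of nonnegative
bases, with the `rpow` conventions `0^c = 0` for `c ≠ 0` and `0^0 = 1`). -/
theorem polynomial_inequality_moment_products
    (p a b : ℝ) (hb : 0 ≤ b) (hba : b + 1 ≤ a) (hap : a ≤ (p + 1) / 2)
    (x y : ℝ) (hx : 0 ≤ x) (hy : 0 ≤ y) :
    x ^ a * y ^ (p - a) + x ^ (p - a) * y ^ a
      ≤ x ^ b * y ^ (p - b) + x ^ (p - b) * y ^ b := by
  have hba' : b ≤ a := by linarith
  have hab : a + b ≤ p := by linarith
  have ha0 : 0 < a := by linarith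
  have hpb : 0 < p - b := by linarith
  have hpa : 0 ≤ p - a := by linarith
  rcases hy.eq_or_lt with rfl | hy0
  · -- y = 0
    simp only [Real.zero_rpow ha0.ne', Real.zero_rpow hpb.ne',
      mul_zero, add_zero, zero_add]
    rcases eq_or_lt_of_le hpa with hpa0 | hpa0
    · rw [← hpa0, Real.rpow_zero, mul_one]
      rcases hb.eq_or_lt with rfl | hb0
      · rw [Real.rpow_zero, mul_one, sub_zero]
        have h : a = p := by linarith
        rw [h]
      · exfalso; linarith
    · rw [Real.zero_rpow hpa0.ne', mul_zero]
      positivity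
  rcases hx.eq_or_lt with rfl | hx0
  · -- x = 0
    simp only [Real.zero_rpow ha0.ne', Real.zero_rpow hpb.ne',
      zero_mul, add_zero, zero_add]
    rcases eq_or_lt_of_le hpa with hpa0 | hpa0
    · rw [← hpa0, Real.rpow_zero, one_mul]
      rcases hb.eq_or_lt with rfl | hb0
      · rw [Real.rpow_zero, one_mul, sub_zero]
        have h : a = p := by linarith
        rw [h]
      · exfalso; linarith
    · rw [Real.zero_rpow hpa0.ne', zero_mul]
      positivity
  -- x, y > 0
  have hu : 0 < x / y := div_pos hx0 hy0
  have hyp : (0:ℝ) < y ^ p := Real.rpow_pos_of_pos hy0 p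
  have key := aux_rpow_ineq p a b (x / y) hba' hab hu
  have conv : ∀ t : ℝ, x ^ t * y ^ (p - t) = (x / y) ^ t * y ^ p := by
    intro t
    rw [Real.rpow_sub hy0, Real.div_rpow hx hy0.le]
    field_simp
  have conv2 : ∀ t : ℝ, x ^ (p - t) * y ^ t = (x / y) ^ (p - t) * y ^ p := by
    intro t
    have h := conv (p - t)
    simpa using h
  rw [conv a, conv2 a, conv b, conv2 b]
  nlinarith [mul_le_mul_of_nonneg_right key hyp.le]
end
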